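/- Let k ≥ 2 and r ≥ 1 be integers. For every (n_1,…,n_k) ∈ ℕ^k, β'_r(n_1,…,n_k) = Σ_{j=r}^{k(k−1)/2} (−1)^{j−r} C(j−1, r−1) Σ_{E ⊆ V^{(2)}, |E| = j} δ_G(n_1,…,n_k), where the inner sum is over all edge sets E of cardinality j on the vertex set V = {1,…,k}, G = (V,E), and C(j−1,r−1) is the binomial coefficient. -/

import Mathlib

set_option linter.unusedVariables false

open Finset

lemma key_aux (s d : ℕ) :
    ∑ t ∈ range (d + 1), (-1 : ℤ) ^ t * ((s + t).choose s) * ((s + 1 + d).choose (s + 1 + t))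
      = 1 := by
  induction d with
  | zero => simp
  | succ d ih =>
    have pascal : ∀ t, ((s + 1 + (d+1)).choose (s + 1 + t))
        = (s + 1 + d).choose (s + t) + (s + 1 + d).choose (s + 1 + t) := by
      intro t
      have h1 : s + 1 + (d+1) = (s + d + 1) + 1 := by ring
      have h2 : s + 1 + t = (s + t) + 1 := by ring
      have h3 : s + 1 + d = s + d + 1 := by ring
      rw [h1, h2, Nat.choose_succ_succ, h3]
    have split : ∑ t ∈ range (d + 2), (-1 : ℤ) ^ t * ((s + t).choose s) *
          ((s + 1 + (d+1)).choose (s + 1 + t))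
        = (∑ t ∈ range (d + 2), (-1 : ℤ) ^ t * ((s + t).choose s) * ((s + 1 + d).choose (s + t)))
        + ∑ t ∈ range (d + 2), (-1 : ℤ) ^ t * ((s + t).choose s) * ((s + 1 + d).choose (s + 1 + t)) := by
      rw [← Finset.sum_add_distrib]
      refine Finset.sum_congr rfl fun t _ => ?_
      rw [pascal t]
      push_cast
      ring
    have hB : ∑ t ∈ range (d + 2), (-1 : ℤ) ^ t * ((s + t).choose s) *
        ((s + 1 + d).choose (s + 1 + t)) = 1 := by
      rw [Finset.sum_range_succ,
        Nat.choose_eq_zero_of_lt (show s + 1 + d < s + 1 + (d + 1) by omega), ih]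
      simp
    have hA : ∑ t ∈ range (d + 2), (-1 : ℤ) ^ t * ((s + t).choose s) *
        ((s + 1 + d).choose (s + t)) = 0 := by
      have tri : ∀ t ∈ range (d + 2), (-1 : ℤ) ^ t * ((s + t).choose s) * ((s + 1 + d).choose (s + t))
          = ((s + 1 + d).choose s) * ((-1 : ℤ) ^ t * ((d + 1).choose t)) := by
        intro t ht
        simp only [mem_range] at ht
        have h := Nat.choose_mul (n := s + 1 + d) (k := s + t) (s := s) (by omega)
        have h2 : s + 1 + d - s = d + 1 := by omega
        have h3 : s + t - s = t := by omega
        rw [h2, h3] at h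
        have h4 : ((s + 1 + d).choose (s + t) : ℤ) * ((s + t).choose s)
            = ((s + 1 + d).choose s) * ((d + 1).choose t) := by exact_mod_cast h
        linear_combination ((-1 : ℤ) ^ t) * h4
      rw [Finset.sum_congr rfl tri, ← Finset.mul_sum]
      have := Int.alternating_sum_range_choose (n := d + 1)
      rw [if_neg (by omega)] at this
      rw [this, mul_zero]
    rw [split, hA, hB]; ring

lemma key (r m : ℕ) (hr : 1 ≤ r) (hm : r ≤ m) :
    ∑ j ∈ Finset.Icc r m, (-1 : ℤ) ^ (j - r) * ((j - 1).choose (r - 1)) * (m.choose j) = 1 := by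
  obtain ⟨s, rfl⟩ : ∃ s, r = s + 1 := ⟨r - 1, by omega⟩
  obtain ⟨d, rfl⟩ : ∃ d, m = s + 1 + d := ⟨m - (s+1), by omega⟩
  rw [← Finset.Ico_add_one_right_eq_Icc, Finset.sum_Ico_eq_sum_range]
  have hn : s + 1 + d + 1 - (s + 1) = d + 1 := by omega
  rw [hn]
  have : ∀ t ∈ range (d+1), (-1 : ℤ) ^ (s + 1 + t - (s+1)) * ((s + 1 + t - 1).choose (s + 1 - 1))
      * ((s + 1 + d).choose (s + 1 + t))
      = (-1 : ℤ) ^ t * ((s + t).choose s) * ((s + 1 + d).choose (s + 1 + t)) := by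
    intro t _
    have e1 : s + 1 + t - (s + 1) = t := by omega
    have e2 : s + 1 + t - 1 = s + t := by omega
    have e3 : s + 1 - 1 = s := by omega
    rw [e1, e2, e3]
  rw [Finset.sum_congr rfl this, key_aux]


/-- Inclusion–exclusion identity for `β'_r`: the indicator of "at least `r` of
the pairs `(n_i, n_j)`, `i < j`, are coprime" equals
`Σ_{j=r}^{k(k-1)/2} (-1)^{j-r} C(j-1,r-1) Σ_{E ⊆ V^{(2)}, |E|=j} δ_G(n)`. -/
theorem stmt_7 (k r : ℕ) (hk : 2 ≤ k) (hr : 1 ≤ r) (n : Fin k → ℕ) (hn : ∀ i, 0 < n i) :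
    (if r ≤ (Finset.univ.filter fun q : Fin k × Fin k =>
          q.1 < q.2 ∧ Nat.gcd (n q.1) (n q.2) = 1).card then (1 : ℤ) else 0) =
    ∑ j ∈ Finset.Icc r (k * (k - 1) / 2), (-1 : ℤ) ^ (j - r) * ((j - 1).choose (r - 1)) *
      ∑ E ∈ (⊤ : SimpleGraph (Fin k)).edgeFinset.powerset.filter (fun E => E.card = j),
        (if ∀ a b : Fin k, s(a, b) ∈ E → Nat.gcd (n a) (n b) = 1
          then (1 : ℤ) else 0) := by
  classical
  set S : Finset (Sym2 (Fin k)) :=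
    (⊤ : SimpleGraph (Fin k)).edgeFinset.filter
      (fun e => ∀ a b : Fin k, e = s(a, b) → Nat.gcd (n a) (n b) = 1) with hS
  set m := S.card with hm
  -- pair count equals S.card
  have hcard : (Finset.univ.filter fun q : Fin k × Fin k =>
      q.1 < q.2 ∧ Nat.gcd (n q.1) (n q.2) = 1).card = m := by
    apply Finset.card_bij (fun q _ => s(q.1, q.2))
    · intro q hq
      simp only [Finset.mem_filter, Finset.mem_univ, true_and] at hq
      simp only [hS, Finset.mem_filter, SimpleGraph.mem_edgeFinset,
        SimpleGraph.mem_edgeSet, SimpleGraph.top_adj]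
      refine ⟨hq.1.ne, fun a b hab => ?_⟩
      rw [Sym2.eq_iff] at hab
      rcases hab with ⟨h1, h2⟩ | ⟨h1, h2⟩
      · rw [← h1, ← h2]; exact hq.2
      · rw [← h1, ← h2, Nat.gcd_comm]; exact hq.2
    · intro q hq q' hq' h
      simp only [Finset.mem_filter, Finset.mem_univ, true_and] at hq hq'
      rw [Sym2.eq_iff] at h
      rcases h with ⟨h1, h2⟩ | ⟨h1, h2⟩
      · exact Prod.ext h1 h2
      · exfalso; omega
    · intro e he
      simp only [hS, Finset.mem_filter, SimpleGraph.mem_edgeFinset,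
        SimpleGraph.mem_edgeSet, SimpleGraph.top_adj] at he
      induction e with
      | _ a b =>
        have hne : a ≠ b := he.1
        rcases lt_or_gt_of_ne hne with h | h
        · exact ⟨(a, b), by
            simp only [Finset.mem_filter, Finset.mem_univ, true_and]
            exact ⟨h, he.2 a b rfl⟩, rfl⟩
        · exact ⟨(b, a), by
            simp only [Finset.mem_filter, Finset.mem_univ, true_and]
            exact ⟨h, he.2 b a (Sym2.eq_swap)⟩, Sym2.eq_swap⟩
  -- inner sum equals choose
  have hinner : ∀ j : ℕ,
      (∑ E ∈ (⊤ : SimpleGraph (Fin k)).edgeFinset.powerset.filter (fun E => E.card = j),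
        (if ∀ a b : Fin k, s(a, b) ∈ E → Nat.gcd (n a) (n b) = 1
          then (1 : ℤ) else 0)) = (m.choose j : ℤ) := by
    intro j
    rw [Finset.sum_boole]
    norm_num
    congr 1
    rw [← Finset.card_powersetCard]
    congr 1
    have hSm : ∀ e, e ∈ S ↔ e ∈ (⊤ : SimpleGraph (Fin k)).edgeFinset ∧
        ∀ a b : Fin k, e = s(a, b) → Nat.gcd (n a) (n b) = 1 := by
      intro e; rw [hS]; exact Finset.mem_filter
    have hedge : ∀ e : Sym2 (Fin k), e ∈ (⊤ : SimpleGraph (Fin k)).edgeFinset ↔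
        e ∈ Finset.filter (fun e => ¬e.IsDiag) (Finset.univ : Finset (Sym2 (Fin k))) := by
      intro e
      simp [SimpleGraph.mem_edgeFinset, SimpleGraph.mem_edgeSet, Sym2.mk_isDiag_iff]
    ext E
    simp only [Finset.mem_filter, Finset.mem_powerset, Finset.mem_powersetCard]
    constructor
    · rintro ⟨⟨hEsub, hEj⟩, hcop⟩
      refine ⟨fun e heE => ?_, hEj⟩
      exact (hSm e).mpr ⟨(hedge e).mpr (by simpa using hEsub heE), fun a b hab => hcop a b (hab ▸ heE)⟩
    · rintro ⟨hEsub, hEj⟩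
      refine ⟨⟨fun e heE => by simpa using (hedge e).mp ((hSm e).mp (hEsub heE)).1, hEj⟩, fun a b hab => ?_⟩
      exact ((hSm _).mp (hEsub hab)).2 a b rfl
  simp only [hinner, hcard]
  -- m ≤ N
  have hmN : m ≤ k * (k - 1) / 2 := by
    have h1 : S.card ≤ (⊤ : SimpleGraph (Fin k)).edgeFinset.card :=
      Finset.card_le_card (Finset.filter_subset _ _)
    have h2 : (⊤ : SimpleGraph (Fin k)).edgeFinset.card = k.choose 2 := by
      rw [SimpleGraph.card_edgeFinset_top_eq_card_choose_two, Fintype.card_fin]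
    rw [Nat.choose_two_right] at h2
    omega
  by_cases hrm : r ≤ m
  · rw [if_pos hrm]
    rw [← Finset.sum_subset (Finset.Icc_subset_Icc_right hmN)
      (fun j hj hj' => by
        simp only [Finset.mem_Icc] at hj hj'
        rw [Nat.choose_eq_zero_of_lt (show m < j by omega)]
        simp)]
    exact (key r m hr hrm).symm
  · rw [if_neg hrm]
    symm
    apply Finset.sum_eq_zero
    intro j hj
    simp only [Finset.mem_Icc] at hj
    rw [Nat.choose_eq_zero_of_lt (show m < j by omega)]
    simp
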